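/- Let μ_i, μ_k ∈ ℝ, τ_i, τ_k > 0, and ρ ∈ [−1, 1]. Let h_i ~ N(μ_i, τ_i²) and h_k ~ N(μ_k, τ_k²) be Gaussian random variables, let X and Z be standard normal, set ε_i = X and ε_k = ρX + √(1−ρ²)·Z, and assume h_i, h_k, X, Z are mutually independent. Define the returns r_i = exp(h_i/2)·ε_i and r_k = exp(h_k/2)·ε_k. Then Cov(r_i², r_k²) = 2ρ² · exp[(μ_i + μ_k) + (τ_i² + τ_k²)/2]. In particular, in the IR-MSV model with stationary log-volatility variances τ_i² = σ_i²/(1−φ_i²) and τ_k² = σ_k²/(1−φ_k²) and error correlation ρ_{ik}, the off-diagonal entry of the covariance matrix of the squared-return vector is 2ρ_{ik}² · exp[(μ_i + μ_k) + (σ_i²/(1−φ_i²) + σ_k²/(1−φ_k²))/2]. -/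

import Mathlib

open MeasureTheory ProbabilityTheory Real

/-- Covariance of two real random variables: `Cov(X,Y) = E[(X - E X)(Y - E Y)]`. -/
noncomputable def cov {Ω : Type*} [MeasurableSpace Ω] (P : Measure Ω) (X Y : Ω → ℝ) : ℝ :=
  ∫ ω, (X ω - ∫ a, X a ∂P) * (Y ω - ∫ a, Y a ∂P) ∂P

section Aux
open Filter Set
open scoped ENNReal NNReal

noncomputable def Mgauss (n : ℕ) : ℝ := ∫ x : ℝ, x ^ n * Real.exp (-(1/2) * x ^ 2)

lemma intg (n : ℕ) : Integrable (fun x : ℝ => x ^ n * Real.exp (-(1/2) * x ^ 2)) := by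
  have h := integrable_rpow_mul_exp_neg_mul_sq (by norm_num : (0:ℝ) < 1/2) (s := (n:ℝ))
    (by have := Nat.cast_nonneg (α := ℝ) n; linarith)
  simpa [Real.rpow_natCast] using h

lemma tend_top (n : ℕ) : Tendsto (fun x : ℝ => x ^ n * Real.exp (-(1/2) * x ^ 2)) atTop (nhds 0) := by
  have h := rpow_mul_exp_neg_mul_sq_isLittleO_exp_neg (by norm_num : (0:ℝ) < 1/2) (n:ℝ)
  have h2 : Tendsto (fun x : ℝ => Real.exp (-(1/2) * x)) atTop (nhds 0) := by
    apply Real.tendsto_exp_atBot.comp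
    exact Tendsto.const_mul_atTop_of_neg (by norm_num) tendsto_id
  simpa [Real.rpow_natCast] using h.isBigO.trans_tendsto h2

lemma tend_bot (n : ℕ) : Tendsto (fun x : ℝ => x ^ n * Real.exp (-(1/2) * x ^ 2)) atBot (nhds 0) := by
  have h := (tend_top n).comp tendsto_neg_atBot_atTop
  have h2 : Tendsto (fun x : ℝ => (-x) ^ n * Real.exp (-(1/2) * x ^ 2)) atBot (nhds 0) := by
    have : ((fun x : ℝ => x ^ n * Real.exp (-(1/2) * x ^ 2)) ∘ Neg.neg)
        = fun x : ℝ => (-x) ^ n * Real.exp (-(1/2) * x ^ 2) := by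
      funext x; simp [Function.comp]
    rwa [this] at h
  have h3 := h2.const_mul ((-1 : ℝ) ^ n)
  simp only [mul_zero] at h3
  have he : (fun x : ℝ => x ^ n * Real.exp (-(1/2) * x ^ 2))
      = fun x : ℝ => (-1 : ℝ) ^ n * ((-x) ^ n * Real.exp (-(1/2) * x ^ 2)) := by
    funext x
    rw [← mul_assoc, ← mul_pow]
    norm_num
  rw [he]
  exact h3

lemma ftc_line {f f' : ℝ → ℝ} (hd : ∀ x, HasDerivAt f (f' x) x) (hi : Integrable f')
    (hbot : Tendsto f atBot (nhds 0)) (htop : Tendsto f atTop (nhds 0)) :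
    ∫ x, f' x = 0 := by
  have h1 : ∫ x in Set.Iic (0:ℝ), f' x = f 0 - 0 :=
    integral_Iic_of_hasDerivAt_of_tendsto' (fun x _ => hd x) hi.integrableOn hbot
  have h2 : ∫ x in Set.Ioi (0:ℝ), f' x = 0 - f 0 :=
    integral_Ioi_of_hasDerivAt_of_tendsto' (fun x _ => hd x) hi.integrableOn htop
  have h3 := integral_add_compl (measurableSet_Iic (a := (0:ℝ))) hi
  rw [Set.compl_Iic] at h3
  rw [← h3, h1, h2]
  ring

lemma Mgauss_zero : Mgauss 0 = Real.sqrt (2 * π) := by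
  have := integral_gaussian (1/2 : ℝ)
  have h2 : π / (1/2 : ℝ) = 2 * π := by ring
  rw [h2] at this
  simpa [Mgauss] using this

lemma Mgauss_one : Mgauss 1 = 0 := by
  have hd : ∀ x : ℝ, HasDerivAt (fun x : ℝ => -Real.exp (-(1/2) * x ^ 2))
      (x ^ 1 * Real.exp (-(1/2) * x ^ 2)) x := by
    intro x
    have h1 : HasDerivAt (fun x : ℝ => -(1/2 : ℝ) * x ^ 2) (-(1/2 : ℝ) * (2 * x ^ 1)) x :=
      (hasDerivAt_pow 2 x).const_mul _
    have h2 : HasDerivAt (fun x : ℝ => -Real.exp (-(1/2) * x ^ 2)) _ x := h1.exp.neg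
    convert h2 using 1
    push_cast
    ring
  have := ftc_line hd (intg 1) ?_ ?_
  · simpa [Mgauss] using this
  · have := (tend_bot 0).neg
    simpa using this
  · have := (tend_top 0).neg
    simpa using this

lemma Mgauss_rec (n : ℕ) : Mgauss (n + 2) = (n + 1 : ℝ) * Mgauss n := by
  have hd : ∀ x : ℝ, HasDerivAt (fun x : ℝ => -(x ^ (n+1)) * Real.exp (-(1/2) * x ^ 2))
      (x ^ (n+2) * Real.exp (-(1/2) * x ^ 2) - (n+1 : ℝ) * (x ^ n * Real.exp (-(1/2) * x ^ 2))) x := by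
    intro x
    have h1 : HasDerivAt (fun x : ℝ => -(1/2 : ℝ) * x ^ 2) (-(1/2 : ℝ) * (2 * x ^ 1)) x :=
      (hasDerivAt_pow 2 x).const_mul _
    have h2 : HasDerivAt (fun x : ℝ => -(x ^ (n+1)) * Real.exp (-(1/2) * x ^ 2)) _ x :=
      ((hasDerivAt_pow (n+1) x).neg).mul h1.exp
    convert h2 using 1
    simp only [Pi.neg_apply]
    push_cast
    ring
  have hzero := ftc_line hd ((intg (n+2)).sub ((intg n).const_mul _)) ?_ ?_
  · have hsub := integral_sub (intg (n+2)) ((intg n).const_mul ((n:ℝ)+1))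
    rw [hsub] at hzero
    rw [integral_const_mul] at hzero
    have : Mgauss (n+2) - (n+1 : ℝ) * Mgauss n = 0 := hzero
    linarith
  · have := (tend_bot (n+1)).neg
    simpa [neg_mul] using this
  · have := (tend_top (n+1)).neg
    simpa [neg_mul] using this

lemma Mgauss_two : Mgauss 2 = Real.sqrt (2 * π) := by
  have := Mgauss_rec 0
  simpa [Mgauss_zero] using this

lemma Mgauss_four : Mgauss 4 = 3 * Real.sqrt (2 * π) := by
  have h := Mgauss_rec 2
  rw [Mgauss_two, show ((2:ℕ):ℝ) + 1 = 3 by norm_num] at h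
  exact h

lemma gaussianReal_withDensity (m : ℝ) {v : ℝ≥0} (hv : v ≠ 0) :
    gaussianReal m v
      = volume.withDensity (fun x => ((gaussianPDFReal m v x).toNNReal : ℝ≥0∞)) := by
  rw [gaussianReal_of_var_ne_zero m hv]
  rfl

lemma integral_gaussianReal_eq (m : ℝ) {v : ℝ≥0} (hv : v ≠ 0) (g : ℝ → ℝ) :
    ∫ x, g x ∂(gaussianReal m v) = ∫ x, gaussianPDFReal m v x * g x := by
  rw [gaussianReal_withDensity m hv,
    integral_withDensity_eq_integral_smul ((measurable_gaussianPDFReal m v).real_toNNReal) g]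
  congr 1
  funext x
  simp [NNReal.smul_def, Real.coe_toNNReal _ (gaussianPDFReal_nonneg m v x)]

lemma integrable_gaussianReal_iff (m : ℝ) {v : ℝ≥0} (hv : v ≠ 0) (g : ℝ → ℝ) :
    Integrable g (gaussianReal m v)
      ↔ Integrable (fun x => gaussianPDFReal m v x * g x) volume := by
  rw [gaussianReal_withDensity m hv,
    integrable_withDensity_iff_integrable_smul ((measurable_gaussianPDFReal m v).real_toNNReal)]
  constructor <;> intro h <;> refine h.congr (Filter.Eventually.of_forall fun x => ?_) <;>
    simp [NNReal.smul_def, Real.coe_toNNReal _ (gaussianPDFReal_nonneg m v x)]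

lemma gaussianPDFReal_std (x : ℝ) :
    gaussianPDFReal 0 1 x = (Real.sqrt (2 * π))⁻¹ * Real.exp (-(1/2) * x ^ 2) := by
  have h1 : 2 * π * ((1:ℝ≥0):ℝ) = 2 * π := by norm_num
  have h2 : -(x - 0)^2/(2 * ((1:ℝ≥0):ℝ)) = -(1/2) * x ^ 2 := by norm_num; ring
  rw [gaussianPDFReal, h1, h2]

lemma integral_pow_gaussianReal (n : ℕ) :
    ∫ x, x ^ n ∂(gaussianReal 0 1) = (Real.sqrt (2 * π))⁻¹ * Mgauss n := by
  rw [integral_gaussianReal_eq 0 one_ne_zero]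
  have : (fun x : ℝ => gaussianPDFReal 0 1 x * x ^ n)
      = fun x : ℝ => (Real.sqrt (2 * π))⁻¹ * (x ^ n * Real.exp (-(1/2) * x ^ 2)) := by
    funext x
    rw [gaussianPDFReal_std]
    ring
  rw [this, integral_const_mul]
  rfl

lemma integrable_pow_gaussianReal (n : ℕ) :
    Integrable (fun x => x ^ n) (gaussianReal 0 1) := by
  rw [integrable_gaussianReal_iff 0 one_ne_zero]
  have : (fun x : ℝ => gaussianPDFReal 0 1 x * x ^ n)
      = fun x : ℝ => (Real.sqrt (2 * π))⁻¹ * (x ^ n * Real.exp (-(1/2) * x ^ 2)) := by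
    funext x
    rw [gaussianPDFReal_std]
    ring
  rw [this]
  exact (intg n).const_mul _

lemma sqrt_two_pi_ne : Real.sqrt (2 * π) ≠ 0 := by
  positivity

lemma gauss_m1 : ∫ x, x ∂(gaussianReal 0 1) = 0 := by
  have := integral_pow_gaussianReal 1
  simpa [Mgauss_one] using this

lemma gauss_m2 : ∫ x, x ^ 2 ∂(gaussianReal 0 1) = 1 := by
  rw [integral_pow_gaussianReal 2, Mgauss_two, inv_mul_cancel₀ sqrt_two_pi_ne]

lemma gauss_m4 : ∫ x, x ^ 4 ∂(gaussianReal 0 1) = 3 := by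
  rw [integral_pow_gaussianReal 4, Mgauss_four]
  rw [mul_comm (3:ℝ), ← mul_assoc, inv_mul_cancel₀ sqrt_two_pi_ne, one_mul]

lemma gaussianPDF_exp_key (m : ℝ) {v : ℝ≥0} (hv : v ≠ 0) (x : ℝ) :
    gaussianPDFReal m v x * Real.exp x
      = Real.exp (m + v / 2) * gaussianPDFReal (m + v) v x := by
  have hv' : (0:ℝ) < (v:ℝ) := by positivity
  rw [gaussianPDFReal, gaussianPDFReal]
  have key : Real.exp (-(x - m)^2 / (2 * v)) * Real.exp x
      = Real.exp (m + v / 2) * Real.exp (-(x - (m + v))^2 / (2 * v)) := by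
    rw [← Real.exp_add, ← Real.exp_add]
    congr 1
    field_simp
    ring
  calc (√(2 * π * v))⁻¹ * Real.exp (-(x - m)^2 / (2 * v)) * Real.exp x
      = (√(2 * π * v))⁻¹ * (Real.exp (-(x - m)^2 / (2 * v)) * Real.exp x) := by ring
    _ = (√(2 * π * v))⁻¹ * (Real.exp (m + v / 2) * Real.exp (-(x - (m + v))^2 / (2 * v))) := by
        rw [key]
    _ = Real.exp (m + v / 2) * ((√(2 * π * v))⁻¹ * Real.exp (-(x - (m + v))^2 / (2 * v))) := by
        ring

lemma integral_exp_gaussianReal (m : ℝ) {v : ℝ≥0} (hv : v ≠ 0) :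
    ∫ x, Real.exp x ∂(gaussianReal m v) = Real.exp (m + v / 2) := by
  rw [integral_gaussianReal_eq m hv]
  have : (fun x => gaussianPDFReal m v x * Real.exp x)
      = fun x => Real.exp (m + v / 2) * gaussianPDFReal (m + v) v x := by
    funext x; exact gaussianPDF_exp_key m hv x
  rw [this, integral_const_mul, integral_gaussianPDFReal_eq_one (m + v) hv, mul_one]

lemma integrable_exp_gaussianReal (m : ℝ) {v : ℝ≥0} (hv : v ≠ 0) :
    Integrable Real.exp (gaussianReal m v) := by
  rw [integrable_gaussianReal_iff m hv]
  have : (fun x => gaussianPDFReal m v x * Real.exp x)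
      = fun x => Real.exp (m + v / 2) * gaussianPDFReal (m + v) v x := by
    funext x; exact gaussianPDF_exp_key m hv x
  rw [this]
  exact (integrable_gaussianPDFReal (m + v) v).const_mul _

section Transfer
variable {Ω : Type*} [MeasurableSpace Ω] {P : Measure Ω}

lemma integral_comp_law {W : Ω → ℝ} (hm : Measurable W) {ν : Measure ℝ}
    (hlaw : Measure.map W P = ν) {g : ℝ → ℝ} (hg : Measurable g) :
    ∫ ω, g (W ω) ∂P = ∫ x, g x ∂ν := by
  rw [← hlaw, integral_map hm.aemeasurable hg.aestronglyMeasurable]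

lemma integrable_comp_law {W : Ω → ℝ} (hm : Measurable W) {ν : Measure ℝ}
    (hlaw : Measure.map W P = ν) {g : ℝ → ℝ} (hg : Measurable g)
    (h : Integrable g ν) : Integrable (fun ω => g (W ω)) P := by
  rw [← hlaw] at h
  exact (integrable_map_measure hg.aestronglyMeasurable hm.aemeasurable).mp h

end Transfer

lemma cov_eq_sub {Ω : Type*} [MeasurableSpace Ω] (P : Measure Ω) [IsProbabilityMeasure P]
    {A B : Ω → ℝ} (hA : Integrable A P) (hB : Integrable B P)
    (hAB : Integrable (fun ω => A ω * B ω) P) :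
    cov P A B = (∫ ω, A ω * B ω ∂P) - (∫ ω, A ω ∂P) * (∫ ω, B ω ∂P) := by
  set a := ∫ ω, A ω ∂P with ha
  set b := ∫ ω, B ω ∂P with hb
  have hfe : (fun ω => (A ω - a) * (B ω - b))
      = fun ω => (A ω * B ω - a * B ω) - (b * A ω - a * b) := by
    funext ω; ring
  have h1 : Integrable (fun ω => A ω * B ω - a * B ω) P := hAB.sub (hB.const_mul a)
  have h2 : Integrable (fun ω => b * A ω - a * b) P :=
    (hA.const_mul b).sub (integrable_const (a * b))
  rw [cov, ← ha, ← hb, hfe,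
    integral_sub h1 h2,
    integral_sub hAB (hB.const_mul a),
    integral_sub (hA.const_mul b) (integrable_const (a * b)),
    integral_const_mul, integral_const_mul, integral_const]
  simp only [probReal_univ, smul_eq_mul, one_mul]
  ring

end Aux

/-- in the constant-correlation IR-MSV model, with `hi ~ N(μi, τi²)`,
`hk ~ N(μk, τk²)`, `X, Z` standard normal, `hi, hk, X, Z` mutually independent,
`εi = X`, `εk = ρX + √(1-ρ²)·Z`, and returns `ri = exp(hi/2)·εi`, `rk = exp(hk/2)·εk`,
one has `Cov(ri², rk²) = 2ρ²·exp((μi + μk) + (τi² + τk²)/2)`; in particular with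
`τi² = σi²/(1-φi²)` and `τk² = σk²/(1-φk²)` the off-diagonal entry of the covariance
matrix of the squared-return vector is
`2ρ²·exp((μi + μk) + (σi²/(1-φi²) + σk²/(1-φk²))/2)`. -/
theorem irmsv_squared_return_cross_covariance
    {Ω : Type*} [MeasurableSpace Ω] (P : Measure Ω) [IsProbabilityMeasure P]
    (μi μk τi τk : ℝ) (hτi : 0 < τi) (hτk : 0 < τk)
    (ρ : ℝ) (hρ : ρ ∈ Set.Icc (-1 : ℝ) 1)
    (hi hk X Z : Ω → ℝ)
    (hmhi : Measurable hi) (hmhk : Measurable hk) (hmX : Measurable X) (hmZ : Measurable Z)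
    (hindep : iIndepFun ![hi, hk, X, Z] P)
    (hhilaw : Measure.map hi P = gaussianReal μi (τi ^ 2).toNNReal)
    (hhklaw : Measure.map hk P = gaussianReal μk (τk ^ 2).toNNReal)
    (hXlaw : Measure.map X P = gaussianReal 0 1)
    (hZlaw : Measure.map Z P = gaussianReal 0 1)
    (εi εk : Ω → ℝ) (hεi : εi = X) (hεk : εk = fun ω => ρ * X ω + Real.sqrt (1 - ρ ^ 2) * Z ω)
    (ri rk : Ω → ℝ)
    (hri : ri = fun ω => Real.exp (hi ω / 2) * εi ω)
    (hrk : rk = fun ω => Real.exp (hk ω / 2) * εk ω) :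
    cov P (fun ω => (ri ω) ^ 2) (fun ω => (rk ω) ^ 2)
      = 2 * ρ ^ 2 * Real.exp ((μi + μk) + (τi ^ 2 + τk ^ 2) / 2)
    ∧ ∀ σi σk φi φk : ℝ, 0 < σi → 0 < σk → 0 < φi → φi < 1 → 0 < φk → φk < 1 →
        τi ^ 2 = σi ^ 2 / (1 - φi ^ 2) → τk ^ 2 = σk ^ 2 / (1 - φk ^ 2) →
        cov P (fun ω => (ri ω) ^ 2) (fun ω => (rk ω) ^ 2)
          = 2 * ρ ^ 2 * Real.exp ((μi + μk)
              + (σi ^ 2 / (1 - φi ^ 2) + σk ^ 2 / (1 - φk ^ 2)) / 2) := by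
  obtain ⟨hρ1, hρ2⟩ := hρ
  set b := Real.sqrt (1 - ρ ^ 2) with hbdef
  have hb2 : b ^ 2 = 1 - ρ ^ 2 := Real.sq_sqrt (by nlinarith)
  -- lognormal means
  have hvI : (τi ^ 2).toNNReal ≠ 0 := by
    simp only [ne_eq, Real.toNNReal_eq_zero, not_le]
    positivity
  have hvK : (τk ^ 2).toNNReal ≠ 0 := by
    simp only [ne_eq, Real.toNNReal_eq_zero, not_le]
    positivity
  have hcI : (((τi ^ 2).toNNReal) : ℝ) = τi ^ 2 := Real.coe_toNNReal _ (by positivity)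
  have hcK : (((τk ^ 2).toNNReal) : ℝ) = τk ^ 2 := Real.coe_toNNReal _ (by positivity)
  have hEi : ∫ ω, Real.exp (hi ω) ∂P = Real.exp (μi + τi ^ 2 / 2) := by
    rw [integral_comp_law hmhi hhilaw Real.measurable_exp,
      integral_exp_gaussianReal μi hvI, hcI]
  have hEk : ∫ ω, Real.exp (hk ω) ∂P = Real.exp (μk + τk ^ 2 / 2) := by
    rw [integral_comp_law hmhk hhklaw Real.measurable_exp,
      integral_exp_gaussianReal μk hvK, hcK]
  have hIEi : Integrable (fun ω => Real.exp (hi ω)) P :=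
    integrable_comp_law hmhi hhilaw Real.measurable_exp (integrable_exp_gaussianReal μi hvI)
  have hIEk : Integrable (fun ω => Real.exp (hk ω)) P :=
    integrable_comp_law hmhk hhklaw Real.measurable_exp (integrable_exp_gaussianReal μk hvK)
  -- gaussian moments for X and Z
  have hX2 : ∫ ω, (X ω) ^ 2 ∂P = 1 :=
    (integral_comp_law hmX hXlaw (measurable_id.pow_const 2)).trans gauss_m2
  have hX4 : ∫ ω, (X ω) ^ 4 ∂P = 3 :=
    (integral_comp_law hmX hXlaw (measurable_id.pow_const 4)).trans gauss_m4
  have hZ1 : ∫ ω, Z ω ∂P = 0 :=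
    (integral_comp_law (g := fun x => x) hmZ hZlaw measurable_id).trans gauss_m1
  have hZ2 : ∫ ω, (Z ω) ^ 2 ∂P = 1 :=
    (integral_comp_law hmZ hZlaw (measurable_id.pow_const 2)).trans gauss_m2
  have ipow : ∀ (W : Ω → ℝ), Measurable W → Measure.map W P = gaussianReal 0 1 →
      ∀ n : ℕ, Integrable (fun ω => (W ω) ^ n) P := fun W hm hl n =>
    integrable_comp_law hm hl (measurable_id.pow_const n) (integrable_pow_gaussianReal n)
  have IX1 : Integrable X P := by
    have := ipow X hmX hXlaw 1
    simpa [pow_one] using this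
  have IZ1 : Integrable Z P := by
    have := ipow Z hmZ hZlaw 1
    simpa [pow_one] using this
  have IX2 : Integrable (fun ω => (X ω) ^ 2) P := ipow X hmX hXlaw 2
  have IX3 : Integrable (fun ω => (X ω) ^ 3) P := ipow X hmX hXlaw 3
  have IX4 : Integrable (fun ω => (X ω) ^ 4) P := ipow X hmX hXlaw 4
  have IZ2 : Integrable (fun ω => (Z ω) ^ 2) P := ipow Z hmZ hZlaw 2
  -- independence
  have hfmeas : ∀ i, Measurable (![hi, hk, X, Z] i) := by
    intro i; fin_cases i <;> assumption
  have I01 : IndepFun hi hk P := hindep.indepFun (show (0 : Fin 4) ≠ 1 by decide)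
  have I02 : IndepFun hi X P := hindep.indepFun (show (0 : Fin 4) ≠ 2 by decide)
  have I23 : IndepFun X Z P := hindep.indepFun (show (2 : Fin 4) ≠ 3 by decide)
  have Ipair : IndepFun (fun ω => (hi ω, hk ω)) (fun ω => (X ω, Z ω)) P :=
    hindep.indepFun_prodMk_prodMk hfmeas 0 1 2 3
      (by decide) (by decide) (by decide) (by decide)
  have IXZhk : IndepFun (fun ω => (X ω, Z ω)) hk P :=
    hindep.indepFun_prodMk hfmeas 2 3 1 (by decide) (by decide)
  have mexp : Measurable Real.exp := Real.measurable_exp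
  have msq : Measurable (fun x : ℝ => x ^ 2) := measurable_id.pow_const 2
  have hmεk : Measurable εk := by
    rw [hεk]; exact (hmX.const_mul ρ).add (hmZ.const_mul b)
  -- products of first moments
  have hXZ0 : ∫ ω, X ω * Z ω ∂P = 0 := by
    have h : ∫ ω, X ω * Z ω ∂P = (∫ ω, X ω ∂P) * ∫ ω, Z ω ∂P :=
      I23.integral_fun_mul_eq_mul_integral IX1.aestronglyMeasurable IZ1.aestronglyMeasurable
    rw [h, hZ1, mul_zero]
  have IXZ : Integrable (fun ω => X ω * Z ω) P := I23.integrable_mul IX1 IZ1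
  -- rewrite squared returns
  have hA : (fun ω => (ri ω) ^ 2) = fun ω => Real.exp (hi ω) * (X ω) ^ 2 := by
    funext ω
    simp only [hri, hεi]
    rw [mul_pow, pow_two (Real.exp _), ← Real.exp_add, add_halves]
  have hB : (fun ω => (rk ω) ^ 2) = fun ω => Real.exp (hk ω) * (εk ω) ^ 2 := by
    funext ω
    simp only [hrk]
    rw [mul_pow, pow_two (Real.exp _), ← Real.exp_add, add_halves]
  have hεk2 : (fun ω => (εk ω) ^ 2)
      = fun ω => ρ ^ 2 * (X ω) ^ 2 + (2 * ρ * b) * (X ω * Z ω) + b ^ 2 * (Z ω) ^ 2 := by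
    funext ω; simp only [hεk]; ring
  have Iεk2 : Integrable (fun ω => (εk ω) ^ 2) P := by
    rw [hεk2]
    exact ((IX2.const_mul _).add (IXZ.const_mul _)).add (IZ2.const_mul _)
  have hEεk2 : ∫ ω, (εk ω) ^ 2 ∂P = 1 := by
    have j1 : Integrable (fun ω => ρ ^ 2 * (X ω) ^ 2) P := IX2.const_mul _
    have j2 : Integrable (fun ω => (2 * ρ * b) * (X ω * Z ω)) P := IXZ.const_mul _
    have j3 : Integrable (fun ω => b ^ 2 * (Z ω) ^ 2) P := IZ2.const_mul _
    have j12 : Integrable (fun ω => ρ ^ 2 * (X ω) ^ 2 + (2 * ρ * b) * (X ω * Z ω)) P := j1.add j2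
    rw [hεk2,
      integral_add j12 j3,
      integral_add j1 j2,
      integral_const_mul, integral_const_mul, integral_const_mul, hX2, hXZ0, hZ2, hb2]
    ring
  -- E[A], E[B]
  have IndA : IndepFun (fun ω => Real.exp (hi ω)) (fun ω => (X ω) ^ 2) P := I02.comp mexp msq
  have EA : ∫ ω, Real.exp (hi ω) * (X ω) ^ 2 ∂P = Real.exp (μi + τi ^ 2 / 2) := by
    have h : ∫ ω, Real.exp (hi ω) * (X ω) ^ 2 ∂P
        = (∫ ω, Real.exp (hi ω) ∂P) * ∫ ω, (X ω) ^ 2 ∂P :=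
      IndA.integral_fun_mul_eq_mul_integral (mexp.comp hmhi).aestronglyMeasurable
        ((hmX.pow_const 2).aestronglyMeasurable)
    rw [h, hEi, hX2, mul_one]
  have IA : Integrable (fun ω => Real.exp (hi ω) * (X ω) ^ 2) P := IndA.integrable_mul hIEi IX2
  have IndB : IndepFun (fun ω => Real.exp (hk ω)) (fun ω => (εk ω) ^ 2) P := by
    have h := IXZhk.symm.comp mexp
      (show Measurable (fun p : ℝ × ℝ => (ρ * p.1 + b * p.2) ^ 2) by fun_prop)
    have he : (fun p : ℝ × ℝ => (ρ * p.1 + b * p.2) ^ 2) ∘ (fun ω => (X ω, Z ω))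
        = fun ω => (εk ω) ^ 2 := by
      funext ω; simp [Function.comp, hεk]
    rwa [he] at h
  have EB : ∫ ω, Real.exp (hk ω) * (εk ω) ^ 2 ∂P = Real.exp (μk + τk ^ 2 / 2) := by
    have h : ∫ ω, Real.exp (hk ω) * (εk ω) ^ 2 ∂P
        = (∫ ω, Real.exp (hk ω) ∂P) * ∫ ω, (εk ω) ^ 2 ∂P :=
      IndB.integral_fun_mul_eq_mul_integral (mexp.comp hmhk).aestronglyMeasurable
        ((hmεk.pow_const 2).aestronglyMeasurable)
    rw [h, hEk, hEεk2, mul_one]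
  have IB : Integrable (fun ω => Real.exp (hk ω) * (εk ω) ^ 2) P := IndB.integrable_mul hIEk Iεk2
  -- E[AB]
  have IndU : IndepFun (fun ω => Real.exp (hi ω)) (fun ω => Real.exp (hk ω)) P :=
    I01.comp mexp mexp
  have EU : ∫ ω, Real.exp (hi ω) * Real.exp (hk ω) ∂P
      = Real.exp (μi + τi ^ 2 / 2) * Real.exp (μk + τk ^ 2 / 2) := by
    have h : ∫ ω, Real.exp (hi ω) * Real.exp (hk ω) ∂P
        = (∫ ω, Real.exp (hi ω) ∂P) * ∫ ω, Real.exp (hk ω) ∂P :=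
      IndU.integral_fun_mul_eq_mul_integral (mexp.comp hmhi).aestronglyMeasurable
        (mexp.comp hmhk).aestronglyMeasurable
    rw [h, hEi, hEk]
  have IU : Integrable (fun ω => Real.exp (hi ω) * Real.exp (hk ω)) P :=
    IndU.integrable_mul hIEi hIEk
  have hVexp : (fun ω => (X ω) ^ 2 * (εk ω) ^ 2)
      = fun ω => ρ ^ 2 * (X ω) ^ 4 + (2 * ρ * b) * ((X ω) ^ 3 * Z ω)
          + b ^ 2 * ((X ω) ^ 2 * (Z ω) ^ 2) := by
    funext ω; simp only [hεk]; ring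
  have IX3Z : Integrable (fun ω => (X ω) ^ 3 * Z ω) P :=
    (I23.comp (measurable_id.pow_const 3) measurable_id).integrable_mul IX3 IZ1
  have IX2Z2 : Integrable (fun ω => (X ω) ^ 2 * (Z ω) ^ 2) P :=
    (I23.comp msq msq).integrable_mul IX2 IZ2
  have IV : Integrable (fun ω => (X ω) ^ 2 * (εk ω) ^ 2) P := by
    rw [hVexp]
    exact ((IX4.const_mul _).add (IX3Z.const_mul _)).add (IX2Z2.const_mul _)
  have EX3Z : ∫ ω, (X ω) ^ 3 * Z ω ∂P = 0 := by
    have h : ∫ ω, (X ω) ^ 3 * Z ω ∂P = (∫ ω, (X ω) ^ 3 ∂P) * ∫ ω, Z ω ∂P :=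
      (I23.comp (measurable_id.pow_const 3) measurable_id).integral_fun_mul_eq_mul_integral
        ((hmX.pow_const 3).aestronglyMeasurable) hmZ.aestronglyMeasurable
    rw [h, hZ1, mul_zero]
  have EX2Z2 : ∫ ω, (X ω) ^ 2 * (Z ω) ^ 2 ∂P = 1 := by
    have h : ∫ ω, (X ω) ^ 2 * (Z ω) ^ 2 ∂P = (∫ ω, (X ω) ^ 2 ∂P) * ∫ ω, (Z ω) ^ 2 ∂P :=
      (I23.comp msq msq).integral_fun_mul_eq_mul_integral ((hmX.pow_const 2).aestronglyMeasurable)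
        ((hmZ.pow_const 2).aestronglyMeasurable)
    rw [h, hX2, hZ2, mul_one]
  have EV : ∫ ω, (X ω) ^ 2 * (εk ω) ^ 2 ∂P = 1 + 2 * ρ ^ 2 := by
    have j1 : Integrable (fun ω => ρ ^ 2 * (X ω) ^ 4) P := IX4.const_mul _
    have j2 : Integrable (fun ω => (2 * ρ * b) * ((X ω) ^ 3 * Z ω)) P := IX3Z.const_mul _
    have j3 : Integrable (fun ω => b ^ 2 * ((X ω) ^ 2 * (Z ω) ^ 2)) P := IX2Z2.const_mul _
    have j12 : Integrable
        (fun ω => ρ ^ 2 * (X ω) ^ 4 + (2 * ρ * b) * ((X ω) ^ 3 * Z ω)) P := j1.add j2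
    rw [hVexp,
      integral_add j12 j3,
      integral_add j1 j2,
      integral_const_mul, integral_const_mul, integral_const_mul, hX4, EX3Z, EX2Z2, hb2]
    ring
  have IndUV : IndepFun (fun ω => Real.exp (hi ω) * Real.exp (hk ω))
      (fun ω => (X ω) ^ 2 * (εk ω) ^ 2) P := by
    have h := Ipair.comp
      (show Measurable (fun p : ℝ × ℝ => Real.exp p.1 * Real.exp p.2) by fun_prop)
      (show Measurable (fun p : ℝ × ℝ => p.1 ^ 2 * (ρ * p.1 + b * p.2) ^ 2) by fun_prop)
    have h1 : (fun p : ℝ × ℝ => Real.exp p.1 * Real.exp p.2) ∘ (fun ω => (hi ω, hk ω))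
        = fun ω => Real.exp (hi ω) * Real.exp (hk ω) := rfl
    have h2 : (fun p : ℝ × ℝ => p.1 ^ 2 * (ρ * p.1 + b * p.2) ^ 2) ∘ (fun ω => (X ω, Z ω))
        = fun ω => (X ω) ^ 2 * (εk ω) ^ 2 := by
      funext ω; simp [Function.comp, hεk]
    rwa [h1, h2] at h
  have EAB : ∫ ω, (Real.exp (hi ω) * (X ω) ^ 2) * (Real.exp (hk ω) * (εk ω) ^ 2) ∂P
      = (Real.exp (μi + τi ^ 2 / 2) * Real.exp (μk + τk ^ 2 / 2)) * (1 + 2 * ρ ^ 2) := by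
    calc ∫ ω, (Real.exp (hi ω) * (X ω) ^ 2) * (Real.exp (hk ω) * (εk ω) ^ 2) ∂P
        = ∫ ω, (Real.exp (hi ω) * Real.exp (hk ω)) * ((X ω) ^ 2 * (εk ω) ^ 2) ∂P := by
          apply integral_congr_ae
          filter_upwards with ω
          ring
      _ = (∫ ω, Real.exp (hi ω) * Real.exp (hk ω) ∂P)
            * ∫ ω, (X ω) ^ 2 * (εk ω) ^ 2 ∂P :=
          IndUV.integral_fun_mul_eq_mul_integral
            ((mexp.comp hmhi).mul (mexp.comp hmhk)).aestronglyMeasurable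
            (((hmX.pow_const 2).mul (hmεk.pow_const 2)).aestronglyMeasurable)
      _ = _ := by rw [EU, EV]
  have IAB : Integrable
      (fun ω => (Real.exp (hi ω) * (X ω) ^ 2) * (Real.exp (hk ω) * (εk ω) ^ 2)) P := by
    have h := IndUV.integrable_mul IU IV
    apply h.congr
    filter_upwards with ω
    show Real.exp (hi ω) * Real.exp (hk ω) * ((X ω) ^ 2 * (εk ω) ^ 2) = _
    ring
  have main : cov P (fun ω => (ri ω) ^ 2) (fun ω => (rk ω) ^ 2)
      = 2 * ρ ^ 2 * Real.exp ((μi + μk) + (τi ^ 2 + τk ^ 2) / 2) := by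
    rw [hA, hB, cov_eq_sub P IA IB IAB, EAB, EA, EB]
    have hexp : Real.exp (μi + τi ^ 2 / 2) * Real.exp (μk + τk ^ 2 / 2)
        = Real.exp ((μi + μk) + (τi ^ 2 + τk ^ 2) / 2) := by
      rw [← Real.exp_add]; congr 1; ring
    rw [hexp]
    ring
  refine ⟨main, ?_⟩
  intro σi σk φi φk _ _ _ _ _ _ hti htk
  rw [← hti, ← htk]
  exact main
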